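/- Let n be a positive natural number and let M be the n×n real matrix whose entry in row j and column l (1 ≤ j, l ≤ n) equals min(j,l) if l ≤ n-1 and j/2 if l = n. Let a = (a_1,...,a_n) be a vector of non-negative real numbers with a_j > 0 for at least one j. Then for every 1 ≤ j ≤ n, the ratio of the j-th entry to the n-th entry of M^k·a converges, as k → ∞, to sin(jπ/(2n)). -/

import Mathlib

open Filter Finset


lemma burgi_theta_half_pos {n : ℕ} (hn : 0 < n) :
    0 < Real.sin (Real.pi / (2 * n) / 2) := by
  apply Real.sin_pos_of_pos_of_lt_pi
  · positivity
  · have h1 : (1:ℝ) ≤ (n:ℝ) := by exact_mod_cast hn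
    have : Real.pi / (2 * n) / 2 ≤ Real.pi / 4 := by
      rw [div_div]
      apply div_le_div_of_nonneg_left Real.pi_pos.le (by norm_num)
      nlinarith
    linarith [Real.pi_pos, Real.pi_gt_three]

lemma burgi_eigen_nat (n : ℕ) (hn : 0 < n) (p : ℕ) (hp : p ≤ n) :
    ∑ l ∈ Finset.range n,
      (if l + 1 ≤ n - 1 then (min p (l + 1) : ℝ) else (p : ℝ) / 2) *
        Real.sin ((l + 1) * (Real.pi / (2 * n)))
    = (1 / (4 * Real.sin (Real.pi / (2 * n) / 2) ^ 2)) *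
        Real.sin (p * (Real.pi / (2 * n))) := by
  set θ : ℝ := Real.pi / (2 * n) with hθ
  have hs : 0 < Real.sin (θ / 2) := burgi_theta_half_pos hn
  induction p with
  | zero =>
    simp only [Nat.cast_zero]
    refine Finset.sum_eq_zero ?_ |>.trans (by simp)
    intro x _
    have h0 : (0:ℝ) ⊓ (↑x + 1) = 0 := min_eq_left (by positivity)
    by_cases h : x + 1 ≤ n - 1 <;> simp [h, h0]
  | succ p ih =>
    have hp' : p ≤ n := by omega
    have hpn : p ≤ n - 1 := by omega
    have ihe := ih hp'
    -- pointwise decomposition of coefficients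
    have hsplit : ∀ l ∈ Finset.range n,
        (if l + 1 ≤ n - 1 then (min (p+1) (l + 1) : ℝ) else ((p:ℝ)+1) / 2) *
          Real.sin ((l + 1) * θ)
        = (if l + 1 ≤ n - 1 then (min p (l + 1) : ℝ) else (p : ℝ) / 2) *
            Real.sin ((l + 1) * θ)
          + (if l + 1 ≤ n - 1 then (if p ≤ l then (1:ℝ) else 0) else 1/2) *
            Real.sin ((l + 1) * θ) := by
      intro l _
      by_cases h1 : l + 1 ≤ n - 1 <;> by_cases h2 : p ≤ l <;>
        simp only [h1, h2, if_true, if_false, ite_true, ite_false]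
      · have e1 : ((p:ℝ)+1) ⊓ (↑l + 1) = (p:ℝ)+1 :=
          min_eq_left (by exact_mod_cast Nat.succ_le_succ h2)
        have e2 : (p:ℝ) ⊓ (↑l + 1) = (p:ℝ) :=
          min_eq_left (by exact_mod_cast Nat.le_succ_of_le h2)
        rw [e1, e2]; ring
      · have hl : l + 1 ≤ p := by omega
        have e1 : ((p:ℝ)+1) ⊓ (↑l + 1) = (l:ℝ)+1 :=
          min_eq_right (by exact_mod_cast Nat.le_succ_of_le hl)
        have e2 : (p:ℝ) ⊓ (↑l + 1) = (l:ℝ)+1 :=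
          min_eq_right (by exact_mod_cast hl)
        rw [e1, e2]; ring
      · ring
      · ring
    -- the increment sum
    have hdiff : ∑ l ∈ Finset.range n,
        (if l + 1 ≤ n - 1 then (if p ≤ l then (1:ℝ) else 0) else 1/2) *
          Real.sin ((l + 1) * θ)
        = Real.cos (p * θ + θ/2) / (2 * Real.sin (θ/2)) := by
      obtain ⟨m, rfl⟩ : ∃ m, n = m + 1 := ⟨n - 1, by omega⟩
      rw [Finset.sum_range_succ]
      have hm1 : ¬ (m + 1 ≤ m + 1 - 1) := by omega
      rw [if_neg hm1]
      have hlast : Real.sin (((m:ℝ) + 1) * θ) = 1 := by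
        have hne : ((m:ℝ) + 1) ≠ 0 := by positivity
        have : ((m:ℝ) + 1) * θ = Real.pi / 2 := by
          rw [hθ]; push_cast; field_simp
        rw [this, Real.sin_pi_div_two]
      have hbody : ∀ l ∈ Finset.range m,
          (if l + 1 ≤ m + 1 - 1 then (if p ≤ l then (1:ℝ) else 0) else 1/2) *
            Real.sin ((l + 1) * θ)
          = if p ≤ l then Real.sin ((l + 1) * θ) else 0 := by
        intro l hl
        rw [Finset.mem_range] at hl
        have : l + 1 ≤ m + 1 - 1 := by omega
        simp only [this, if_true]
        by_cases h2 : p ≤ l <;> simp [h2]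
      rw [Finset.sum_congr rfl hbody]
      -- indicator sum to Ico
      have hind : ∑ l ∈ Finset.range m, (if p ≤ l then Real.sin ((l + 1) * θ) else 0)
          = ∑ l ∈ Finset.Ico p m, Real.sin ((l + 1) * θ) := by
        rw [← Finset.sum_filter]
        apply Finset.sum_congr _ (fun _ _ => rfl)
        ext l
        simp only [Finset.mem_filter, Finset.mem_Ico, Finset.mem_range]
        omega
      rw [hind]
      -- telescoping
      have htel : ∀ l : ℕ, Real.sin ((l + 1 : ℝ) * θ)
          = (Real.cos (l * θ + θ/2) - Real.cos ((l+1) * θ + θ/2)) / (2 * Real.sin (θ/2)) := by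
        intro l
        rw [Real.cos_sub_cos]
        have e1 : ((l:ℝ) * θ + θ/2 + ((l+1) * θ + θ/2)) / 2 = (l + 1) * θ := by ring
        have e2 : ((l:ℝ) * θ + θ/2 - ((l+1) * θ + θ/2)) / 2 = -(θ/2) := by ring
        rw [e1, e2, Real.sin_neg]
        field_simp
      have hIco : ∑ l ∈ Finset.Ico p m, Real.sin ((↑l + 1) * θ)
          = (Real.cos (p * θ + θ/2) - Real.cos (m * θ + θ/2)) / (2 * Real.sin (θ/2)) := by
        have : ∀ l ∈ Finset.Ico p m, Real.sin ((↑l + 1) * θ)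
            = ((fun i : ℕ => Real.cos (i * θ + θ/2)) l
              - (fun i : ℕ => Real.cos (i * θ + θ/2)) (l+1)) / (2 * Real.sin (θ/2)) := by
          intro l _
          simpa using htel l
        have hpm : p ≤ m := by omega
        rw [Finset.sum_congr rfl this, ← Finset.sum_div]
        congr 1
        rw [Finset.sum_Ico_eq_sub _ hpm, Finset.sum_range_sub', Finset.sum_range_sub']
        push_cast
        ring
      have hcosm : Real.cos ((m:ℝ) * θ + θ/2) = Real.sin (θ/2) := by
        have : (m:ℝ) * θ + θ/2 = Real.pi/2 - θ/2 := by
          rw [hθ]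
          have hne : ((m:ℝ) + 1) ≠ 0 := by positivity
          push_cast
          field_simp
          ring
        rw [this, Real.cos_pi_div_two_sub]
      rw [hIco, hcosm, hlast]
      field_simp
      ring
    rw [Finset.sum_congr rfl (by intro l hl; push_cast; exact hsplit l hl),
      Finset.sum_add_distrib, ihe, hdiff]
    have hsin : Real.sin (((p:ℝ)+1) * θ) = Real.sin ((p:ℝ) * θ) + 2 * Real.sin (θ/2) * Real.cos ((p:ℝ)*θ + θ/2) := by
      have := Real.sin_sub_sin (((p:ℝ)+1) * θ) ((p:ℝ) * θ)
      have e1 : ((((p:ℝ)+1) * θ) - (p:ℝ)*θ) / 2 = θ/2 := by ring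
      have e2 : ((((p:ℝ)+1) * θ) + (p:ℝ)*θ) / 2 = (p:ℝ)*θ + θ/2 := by ring
      rw [e1, e2] at this
      linarith
    push_cast
    rw [hsin]
    have hs2 : Real.sin (θ/2) ≠ 0 := ne_of_gt hs
    field_simp
    ring



lemma burgi_avg_upper {ι : Type*} [Fintype ι] [DecidableEq ι]
    (H : (Finset.univ : Finset ι).Nonempty)
    (w b : ι → ℝ) (δ : ℝ) (hδ : 0 ≤ δ) (hw : ∀ i, δ ≤ w i)
    (hsum : ∑ i, w i = 1) :
    ∑ i, w i * b i ≤ Finset.univ.sup' H b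
      - δ * (Finset.univ.sup' H b - Finset.univ.inf' H b) := by
  obtain ⟨i0, -, hi0⟩ := Finset.exists_mem_eq_inf' H b
  set S := Finset.univ.sup' H b
  set I := Finset.univ.inf' H b
  have hSI : I ≤ S :=
    le_trans (Finset.inf'_le b (Finset.mem_univ i0)) (Finset.le_sup' b (Finset.mem_univ i0))
  have hw0 : ∀ i, 0 ≤ w i := fun i => le_trans hδ (hw i)
  have hsplit : ∑ i, w i * b i
      = w i0 * b i0 + ∑ i ∈ Finset.univ.erase i0, w i * b i :=
    (Finset.univ.add_sum_erase _ (Finset.mem_univ i0)).symm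
  have hbound : ∑ i ∈ Finset.univ.erase i0, w i * b i
      ≤ ∑ i ∈ Finset.univ.erase i0, w i * S := by
    apply Finset.sum_le_sum
    intro i _
    exact mul_le_mul_of_nonneg_left (Finset.le_sup' b (Finset.mem_univ i)) (hw0 i)
  have hersum : ∑ i ∈ Finset.univ.erase i0, w i = 1 - w i0 := by
    have h2 : w i0 + ∑ i ∈ Finset.univ.erase i0, w i = 1 := by
      rw [Finset.univ.add_sum_erase _ (Finset.mem_univ i0)]; exact hsum
    linarith
  have hmain : ∑ i, w i * b i ≤ w i0 * I + (1 - w i0) * S := by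
    rw [hsplit, ← hi0]
    have he : ∑ i ∈ Finset.univ.erase i0, w i * S = (1 - w i0) * S := by
      rw [← Finset.sum_mul, hersum]
    linarith [hbound]
  have hwi0 : δ ≤ w i0 := hw i0
  nlinarith [hmain]

lemma burgi_avg_lower {ι : Type*} [Fintype ι] [DecidableEq ι]
    (H : (Finset.univ : Finset ι).Nonempty)
    (w b : ι → ℝ) (δ : ℝ) (hδ : 0 ≤ δ) (hw : ∀ i, δ ≤ w i)
    (hsum : ∑ i, w i = 1) :
    Finset.univ.inf' H b
      + δ * (Finset.univ.sup' H b - Finset.univ.inf' H b) ≤ ∑ i, w i * b i := by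
  obtain ⟨i0, -, hi0⟩ := Finset.exists_mem_eq_sup' H b
  set S := Finset.univ.sup' H b
  set I := Finset.univ.inf' H b
  have hSI : I ≤ S :=
    le_trans (Finset.inf'_le b (Finset.mem_univ i0)) (Finset.le_sup' b (Finset.mem_univ i0))
  have hw0 : ∀ i, 0 ≤ w i := fun i => le_trans hδ (hw i)
  have hsplit : ∑ i, w i * b i
      = w i0 * b i0 + ∑ i ∈ Finset.univ.erase i0, w i * b i :=
    (Finset.univ.add_sum_erase _ (Finset.mem_univ i0)).symm
  have hbound : ∑ i ∈ Finset.univ.erase i0, w i * I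
      ≤ ∑ i ∈ Finset.univ.erase i0, w i * b i := by
    apply Finset.sum_le_sum
    intro i _
    exact mul_le_mul_of_nonneg_left (Finset.inf'_le b (Finset.mem_univ i)) (hw0 i)
  have hersum : ∑ i ∈ Finset.univ.erase i0, w i = 1 - w i0 := by
    have h2 : w i0 + ∑ i ∈ Finset.univ.erase i0, w i = 1 := by
      rw [Finset.univ.add_sum_erase _ (Finset.mem_univ i0)]; exact hsum
    linarith
  have hmain : w i0 * S + (1 - w i0) * I ≤ ∑ i, w i * b i := by
    rw [hsplit, ← hi0]
    have he : ∑ i ∈ Finset.univ.erase i0, w i * I = (1 - w i0) * I := by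
      rw [← Finset.sum_mul, hersum]
    linarith [hbound]
  have hwi0 : δ ≤ w i0 := hw i0
  nlinarith [hmain]



theorem buergi_convergence (n : ℕ) (hn : 0 < n)
    (M : Matrix (Fin n) (Fin n) ℝ)
    (hM : ∀ j l : Fin n, M j l =
      if (l : ℕ) + 1 ≤ n - 1 then (min ((j : ℕ) + 1) ((l : ℕ) + 1) : ℝ)
      else ((j : ℕ) + 1 : ℝ) / 2)
    (a : Fin n → ℝ) (ha : ∀ j, 0 ≤ a j) (hpos : ∃ j, 0 < a j) :
    ∀ j : Fin n,
      Tendsto (fun k : ℕ =>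
          ((M ^ k).mulVec a) j / ((M ^ k).mulVec a) ⟨n - 1, by omega⟩)
        atTop
        (nhds (Real.sin ((((j : ℕ) + 1 : ℕ) : ℝ) * Real.pi / (2 * n)))) := by
  haveI : Nonempty (Fin n) := Fin.pos_iff_nonempty.mp hn
  have H : (Finset.univ : Finset (Fin n)).Nonempty := Finset.univ_nonempty
  set θ : ℝ := Real.pi / (2 * n) with hθ
  have hnR : (0:ℝ) < n := by exact_mod_cast hn
  have hθpos : 0 < θ := by positivity
  have hs : 0 < Real.sin (θ / 2) := burgi_theta_half_pos hn
  set lam : ℝ := 1 / (4 * Real.sin (θ / 2) ^ 2) with hlamdef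
  have hlam : 0 < lam := by positivity
  set v : Fin n → ℝ := fun j => Real.sin (((j : ℕ) + 1) * θ) with hvdef
  have hv : ∀ j, 0 < v j := by
    intro j
    apply Real.sin_pos_of_pos_of_lt_pi
    · positivity
    · have hj : ((j : ℕ) : ℝ) + 1 ≤ n := by exact_mod_cast j.isLt
      have h1 : (((j : ℕ) : ℝ) + 1) * θ ≤ n * θ :=
        mul_le_mul_of_nonneg_right hj hθpos.le
      have h2 : (n : ℝ) * θ = Real.pi / 2 := by
        rw [hθ]; field_simp
      nlinarith [Real.pi_pos]
  have hvn : ∀ j : Fin n, ((j : ℕ) : ℝ) + 1 = (((j:ℕ) + 1 : ℕ) : ℝ) := by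
    intro j; push_cast; ring
  have heig : ∀ j, ∑ l, M j l * v l = lam * v j := by
    intro j
    have key := burgi_eigen_nat n hn ((j : ℕ) + 1) j.isLt
    have h2 : ∑ l : Fin n, M j l * v l
        = ∑ l ∈ Finset.range n,
          (if l + 1 ≤ n - 1 then (min ((((j:ℕ):ℝ)) + 1) ((l:ℝ) + 1)) else (((j:ℕ):ℝ) + 1) / 2) *
            Real.sin (((l:ℝ) + 1) * (Real.pi / (2 * n))) := by
      rw [← Fin.sum_univ_eq_sum_range (fun l =>
        (if l + 1 ≤ n - 1 then (min (((j:ℕ):ℝ) + 1) ((l:ℝ) + 1)) else (((j:ℕ):ℝ) + 1) / 2) *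
          Real.sin (((l:ℝ) + 1) * (Real.pi / (2 * n)))) n]
      apply Finset.sum_congr rfl
      intro l _
      rw [hM j l, hvdef, hθ]
    rw [h2]
    have h3 : ∑ l ∈ Finset.range n,
          (if l + 1 ≤ n - 1 then (min ((((j:ℕ):ℝ)) + 1) ((l:ℝ) + 1)) else (((j:ℕ):ℝ) + 1) / 2) *
            Real.sin (((l:ℝ) + 1) * (Real.pi / (2 * n)))
        = ∑ l ∈ Finset.range n,
          (if l + 1 ≤ n - 1 then (min ((((j:ℕ) + 1 : ℕ)):ℝ) ((l:ℝ) + 1)) else (((j:ℕ) + 1 : ℕ):ℝ) / 2) *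
            Real.sin (((l:ℝ) + 1) * (Real.pi / (2 * n))) := by
      apply Finset.sum_congr rfl
      intro l _
      push_cast
      ring_nf
    rw [h3, key, hlamdef, hvdef, hθ]
    push_cast
    ring_nf
  have hMpos : ∀ j l, 0 < M j l := by
    intro j l
    rw [hM j l]
    split
    · have h1 : (0:ℝ) < (j:ℕ) + 1 := by positivity
      have h2 : (0:ℝ) < (l:ℕ) + 1 := by positivity
      exact lt_min h1 h2
    · positivity
  -- the iterates
  set x : ℕ → Fin n → ℝ := fun k => (M ^ k).mulVec a with hxdef
  have hx0 : ∀ j, x 0 j = a j := by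
    intro j; simp [hxdef, Matrix.one_mulVec]
  have hrec : ∀ k j, x (k+1) j = ∑ l, M j l * x k l := by
    intro k j
    have : M ^ (k+1) = M * M ^ k := by rw [pow_succ']
    simp only [hxdef, this, ← Matrix.mulVec_mulVec]
    simp [Matrix.mulVec, dotProduct]
  set r : ℕ → Fin n → ℝ := fun k j => x k j / (lam ^ k * v j) with hrdef
  have hden : ∀ (k : ℕ) (j : Fin n), lam ^ k * v j ≠ 0 := by
    intro k j
    exact ne_of_gt (mul_pos (pow_pos hlam k) (hv j))
  have hxr : ∀ k j, x k j = r k j * (lam ^ k * v j) := by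
    intro k j
    rw [hrdef]
    exact (div_mul_cancel₀ _ (hden k j)).symm
  set w : Fin n → Fin n → ℝ := fun j l => M j l * v l / (lam * v j) with hwdef
  have hwpos : ∀ j l, 0 < w j l := fun j l =>
    div_pos (mul_pos (hMpos j l) (hv l)) (mul_pos hlam (hv j))
  have hwsum : ∀ j, ∑ l, w j l = 1 := by
    intro j
    have h1 : ∑ l, w j l = (∑ l, M j l * v l) / (lam * v j) := by
      rw [Finset.sum_div]
    rw [h1, heig j, div_self (ne_of_gt (mul_pos hlam (hv j)))]
  have hrrec : ∀ k j, r (k+1) j = ∑ l, w j l * r k l := by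
    intro k j
    have hterm : ∀ l, w j l * r k l = M j l * x k l / (lam ^ (k+1) * v j) := by
      intro l
      have h0 : w j l * r k l
          = (M j l * v l / (lam * v j)) * (x k l / (lam ^ k * v l)) := rfl
      rw [h0, div_mul_div_comm, pow_succ,
        show M j l * v l * x k l = (M j l * x k l) * v l by ring,
        show lam * v j * (lam ^ k * v l) = (lam ^ k * lam * v j) * v l by ring,
        mul_div_mul_right _ _ (ne_of_gt (hv l))]
    rw [Finset.sum_congr rfl (fun l _ => hterm l), ← Finset.sum_div, ← hrec k j]
  -- contraction constant
  set del : ℝ := min (1/2) (Finset.univ.inf' H (fun j => Finset.univ.inf' H (w j))) with hdeldef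
  have hdel_le : ∀ j l, del ≤ w j l := by
    intro j l
    calc del ≤ Finset.univ.inf' H (fun j => Finset.univ.inf' H (w j)) := min_le_right _ _
    _ ≤ Finset.univ.inf' H (w j) := Finset.inf'_le _ (Finset.mem_univ j)
    _ ≤ w j l := Finset.inf'_le _ (Finset.mem_univ l)
  have hdel_pos : 0 < del := by
    apply lt_min (by norm_num)
    apply (Finset.lt_inf'_iff H).mpr
    intro j _
    exact (Finset.lt_inf'_iff H).mpr (fun l _ => hwpos j l)
  have hdel_half : del ≤ 1/2 := min_le_left _ _
  -- min and max of ratios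
  set mmin : ℕ → ℝ := fun k => Finset.univ.inf' H (r k) with hmmindef
  set msup : ℕ → ℝ := fun k => Finset.univ.sup' H (r k) with hmsupdef
  have hgap0 : ∀ k, 0 ≤ msup k - mmin k := by
    intro k
    have := le_trans (Finset.inf'_le (r k) (Finset.mem_univ (Classical.arbitrary (Fin n))))
      (Finset.le_sup' (r k) (Finset.mem_univ (Classical.arbitrary (Fin n))))
    linarith
  have key1 : ∀ k, msup (k+1) ≤ msup k - del * (msup k - mmin k) := by
    intro k
    apply Finset.sup'_le
    intro j _
    rw [hrrec k j]
    exact burgi_avg_upper H (w j) (r k) del hdel_pos.le (hdel_le j) (hwsum j)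
  have key2 : ∀ k, mmin k + del * (msup k - mmin k) ≤ mmin (k+1) := by
    intro k
    apply Finset.le_inf'
    intro j _
    rw [hrrec k j]
    exact burgi_avg_lower H (w j) (r k) del hdel_pos.le (hdel_le j) (hwsum j)
  have hgaprec : ∀ k, msup (k+1) - mmin (k+1) ≤ (1 - 2*del) * (msup k - mmin k) := by
    intro k
    have h1 := key1 k
    have h2 := key2 k
    linarith
  have hone : 0 ≤ 1 - 2*del := by linarith
  have hone' : 1 - 2*del < 1 := by linarith
  have hgapb : ∀ k, msup k - mmin k ≤ (msup 0 - mmin 0) * (1 - 2*del)^k := by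
    intro k
    induction k with
    | zero => simp
    | succ k ih =>
      calc msup (k+1) - mmin (k+1) ≤ (1 - 2*del) * (msup k - mmin k) := hgaprec k
      _ ≤ (1 - 2*del) * ((msup 0 - mmin 0) * (1 - 2*del)^k) :=
          mul_le_mul_of_nonneg_left ih hone
      _ = (msup 0 - mmin 0) * (1 - 2*del)^(k+1) := by ring
  have hgap_to0 : Tendsto (fun k => msup k - mmin k) atTop (nhds 0) := by
    have hq : Tendsto (fun k : ℕ => (msup 0 - mmin 0) * (1 - 2*del)^k) atTop (nhds 0) := by
      have := tendsto_pow_atTop_nhds_zero_of_lt_one hone hone'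
      simpa using this.const_mul (msup 0 - mmin 0)
    exact tendsto_of_tendsto_of_tendsto_of_le_of_le tendsto_const_nhds hq hgap0 hgapb
  -- monotonicity and limits
  have hmono : Monotone mmin := by
    apply monotone_nat_of_le_succ
    intro k
    have := key2 k
    nlinarith [hgap0 k, hdel_pos]
  have hanti : ∀ k, msup (k+1) ≤ msup k := by
    intro k
    have := key1 k
    nlinarith [hgap0 k, hdel_pos]
  have hsup_le : ∀ k, msup k ≤ msup 0 := by
    intro k
    induction k with
    | zero => exact le_refl _
    | succ k ih => exact le_trans (hanti k) ih
  have hbdd : BddAbove (Set.range mmin) := by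
    refine ⟨msup 0, ?_⟩
    rintro y ⟨k, rfl⟩
    have h1 : mmin k ≤ msup k := by linarith [hgap0 k]
    exact le_trans h1 (hsup_le k)
  set L : ℝ := ⨆ k, mmin k with hLdef
  have hL : Tendsto mmin atTop (nhds L) := tendsto_atTop_ciSup hmono hbdd
  have hsupL : Tendsto msup atTop (nhds L) := by
    have heqf : msup = fun k => mmin k + (msup k - mmin k) := by
      funext k; ring
    rw [heqf]
    simpa using hL.add hgap_to0
  have hrL : ∀ j, Tendsto (fun k => r k j) atTop (nhds L) := by
    intro j
    apply tendsto_of_tendsto_of_tendsto_of_le_of_le hL hsupL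
    · intro k; exact Finset.inf'_le (r k) (Finset.mem_univ j)
    · intro k; exact Finset.le_sup' (r k) (Finset.mem_univ j)
  -- positivity of the limit
  have hx1 : ∀ j, 0 < x 1 j := by
    intro j
    rw [hrec 0 j]
    obtain ⟨l0, hl0⟩ := hpos
    apply Finset.sum_pos' (fun l _ => mul_nonneg (hMpos j l).le (hx0 l ▸ ha l))
    exact ⟨l0, Finset.mem_univ l0, by rw [hx0 l0]; exact mul_pos (hMpos j l0) hl0⟩
  have hm1 : 0 < mmin 1 := by
    apply (Finset.lt_inf'_iff H).mpr
    intro j _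
    exact div_pos (hx1 j) (mul_pos (pow_pos hlam 1) (hv j))
  have hLpos : 0 < L := by
    have h1 : mmin 1 ≤ L := le_ciSup hbdd 1
    linarith
  -- conclusion
  intro j
  set last : Fin n := ⟨n - 1, by omega⟩ with hlastdef
  have hvlast : v last = 1 := by
    have h1 : (((last : ℕ) : ℝ) + 1) = n := by
      rw [hlastdef]
      have : ((n - 1 : ℕ) : ℝ) + 1 = (((n - 1) + 1 : ℕ) : ℝ) := by push_cast; ring
      rw [this]
      congr 1
      omega
    have h2 : v last = Real.sin ((((last : ℕ) : ℝ) + 1) * θ) := rfl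
    rw [h2, h1, hθ]
    rw [show (n:ℝ) * (Real.pi / (2 * n)) = Real.pi / 2 by field_simp]
    exact Real.sin_pi_div_two
  have heqfun : (fun k : ℕ => x k j / x k last)
      = fun k => (r k j * v j) / (r k last * v last) := by
    funext k
    rw [hxr k j, hxr k last,
      show r k j * (lam ^ k * v j) = (r k j * v j) * lam ^ k by ring,
      show r k last * (lam ^ k * v last) = (r k last * v last) * lam ^ k by ring,
      mul_div_mul_right _ _ (pow_ne_zero k (ne_of_gt hlam))]
  have hlim : Tendsto (fun k : ℕ => x k j / x k last) atTop
      (nhds ((L * v j) / (L * v last))) := by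
    rw [heqfun]
    exact Tendsto.div ((hrL j).mul_const (v j)) ((hrL last).mul_const (v last))
      (by rw [hvlast, mul_one]; exact ne_of_gt hLpos)
  have hval : (L * v j) / (L * v last) = Real.sin ((((j : ℕ) + 1 : ℕ) : ℝ) * Real.pi / (2 * n)) := by
    rw [hvlast, mul_one, mul_comm, mul_div_assoc, div_self (ne_of_gt hLpos), mul_one]
    show Real.sin ((((j:ℕ):ℝ) + 1) * θ) = _
    rw [hθ]
    push_cast
    ring_nf
  rw [← hval]
  exact hlim
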